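/- Let V = 𝔽₂³ and S = {(0,0,1), (1,1,0), (0,1,0)} ⊆ V. Then the cubelike graph Γ = Cay(V, S) has PEST from the edge ((0,0,0), (0,0,1)) to the edge ((1,0,1), (1,0,0)) at time π/2. -/

import Mathlib

open Matrix Finset

noncomputable section

/-- The adjacency matrix of the Cayley (cubelike) graph `Cay(G, S)`. -/
def adjMatrix {G : Type*} [AddCommGroup G] [Fintype G] [DecidableEq G]
    (S : Finset G) : Matrix G G ℂ :=
  fun u v => if u + v ∈ S then 1 else 0

/-- The transfer matrix `H(t) = exp(i t A)`. -/
def transferMatrix {G : Type*} [AddCommGroup G] [Fintype G] [DecidableEq G]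
    (S : Finset G) (t : ℝ) : Matrix G G ℂ :=
  NormedSpace.exp (Complex.I • ((t : ℂ) • adjMatrix S))

/-- The standard basis vector `e_a` of `ℂ^V`. -/
def stdBasis {G : Type*} [DecidableEq G] (a : G) : G → ℂ :=
  fun v => if v = a then 1 else 0

/-- Perfect edge state transfer from the edge `(a,b)` to the edge `(c,d)` at time `t`:
`|(1/2)(e_c - e_d)ᵀ H(t)(e_a - e_b)|² = 1`. -/
def hasPEST {G : Type*} [AddCommGroup G] [Fintype G] [DecidableEq G]
    (S : Finset G) (a b c d : G) (t : ℝ) : Prop :=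
  ‖(1 / 2 : ℂ) * dotProduct (stdBasis c - stdBasis d)
      (transferMatrix S t *ᵥ (stdBasis a - stdBasis b))‖ ^ 2 = 1

/-- The eigenvalue `λ_x = ∑_{s ∈ S} (-1)^{x·s}` of a cubelike graph. -/
def lam {m : ℕ} (S : Finset (Fin m → ZMod 2)) (x : Fin m → ZMod 2) : ℤ :=
  ∑ s ∈ S, (-1) ^ (x ⬝ᵥ s).val

/-! ### Auxiliary material -/

abbrev Vv : Type := Fin 3 → ZMod 2

lemma Vv_add_self (x : Vv) : x + x = 0 := by
  funext i
  fin_cases i <;> simp [CharTwo.add_self_eq_zero]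

lemma Vv_add_eq_iff (u v s : Vv) : u + v = s ↔ v = u + s := by
  constructor
  · rintro rfl; rw [← add_assoc, Vv_add_self, zero_add]
  · rintro rfl; rw [← add_assoc, Vv_add_self, zero_add]


lemma sum_ite_addeq (u s : Vv) (f : Vv → ℂ) :
    ∑ v : Vv, (if u + v = s then f v else 0) = f (u + s) := by
  rw [Finset.sum_congr rfl (fun v _ => if_congr (Vv_add_eq_iff u v s) rfl rfl),
    Finset.sum_ite_eq']
  simp

/-- The permutation matrix of translation by `s`. -/
def Pmat (s : Vv) : Matrix Vv Vv ℂ :=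
  fun u v => if u + v = s then 1 else 0

lemma Pmat_mul (s s' : Vv) : Pmat s * Pmat s' = Pmat (s + s') := by
  ext u w
  simp only [Matrix.mul_apply, Pmat, ite_mul, one_mul, zero_mul]
  rw [sum_ite_addeq u s (fun v => if v + w = s' then (1:ℂ) else 0)]
  refine if_congr ?_ rfl rfl
  rw [Vv_add_eq_iff, Vv_add_eq_iff]
  constructor
  · rintro rfl; rw [← add_assoc]
  · rintro rfl; rw [← add_assoc]

lemma Pmat_commute (s s' : Vv) : Commute (Pmat s) (Pmat s') := by
  unfold Commute SemiconjBy
  rw [Pmat_mul, Pmat_mul, add_comm]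

lemma Pmat_mul_self (s : Vv) : Pmat s * Pmat s = 1 := by
  rw [Pmat_mul, Vv_add_self]
  ext u v
  simp only [Pmat, Matrix.one_apply]
  congr 1
  simp only [eq_iff_iff]
  rw [Vv_add_eq_iff, add_zero, eq_comm]

lemma exp_smul_involution {V : Type*} [Fintype V] [DecidableEq V]
    (P : Matrix V V ℂ) (h : P * P = 1) (c : ℂ) :
    NormedSpace.exp (c • P) = Complex.cosh c • (1 : Matrix V V ℂ) + Complex.sinh c • P := by
  have hpow_even : ∀ k : ℕ, P ^ (2 * k) = 1 := fun k => by
    rw [pow_mul, sq, h, one_pow]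
  have hpow_odd : ∀ k : ℕ, P ^ (2 * k + 1) = P := fun k => by
    rw [pow_succ, hpow_even, one_mul]
  rw [NormedSpace.exp_eq_tsum ℂ]
  have hsum : HasSum (fun m : ℕ => (((Nat.factorial m : ℕ) : ℂ))⁻¹ • (c • P) ^ m)
      (Complex.cosh c • (1 : Matrix V V ℂ) + Complex.sinh c • P) := by
    refine HasSum.even_add_odd ?_ ?_
    · have := (Complex.hasSum_cosh c).smul_const (1 : Matrix V V ℂ)
      convert this using 2 with k
      rw [smul_pow, hpow_even, smul_smul, div_eq_inv_mul]
    · have := (Complex.hasSum_sinh c).smul_const P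
      convert this using 2 with k
      rw [smul_pow, hpow_odd, smul_smul, div_eq_inv_mul]
  exact hsum.tsum_eq

lemma exp_I_half_pi_smul (s : Vv) :
    NormedSpace.exp ((Complex.I * ((Real.pi / 2 : ℝ) : ℂ)) • Pmat s)
      = Complex.I • Pmat s := by
  rw [exp_smul_involution _ (Pmat_mul_self s), mul_comm Complex.I, Complex.cosh_mul_I,
    Complex.sinh_mul_I]
  rw [show ((Real.pi / 2 : ℝ) : ℂ) = ((Real.pi / 2 : ℝ) : ℂ) from rfl]
  rw [← Complex.ofReal_cos, ← Complex.ofReal_sin, Real.cos_pi_div_two, Real.sin_pi_div_two]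
  simp

lemma Pmat_mulVec_stdBasis (σ a : Vv) :
    Pmat σ *ᵥ stdBasis a = stdBasis (σ + a) := by
  funext u
  simp only [Matrix.mulVec, dotProduct, Pmat, _root_.stdBasis, ite_mul, one_mul, zero_mul]
  rw [sum_ite_addeq u σ (fun v => if v = a then (1:ℂ) else 0)]
  refine if_congr ?_ rfl rfl
  rw [add_comm u σ]
  exact Vv_add_eq_iff σ u a
lemma stdBasis_dot (x y : Vv) :
    dotProduct (stdBasis x) (stdBasis y) = if x = y then 1 else 0 := by
  simp only [dotProduct, _root_.stdBasis, ite_mul, one_mul, zero_mul]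
  rw [Finset.sum_ite_eq' Finset.univ x fun v => if v = y then (1:ℂ) else 0]
  simp

/-- The cubelike graph on `𝔽₂³` with connection set `S = {001, 110, 010}` has PEST
from the edge `(000, 001)` to the edge `(101, 100)` at time `π/2` (Example 2). -/
theorem hasPEST_example2 :
    hasPEST ({![0,0,1], ![1,1,0], ![0,1,0]} : Finset (Fin 3 → ZMod 2))
      ![0,0,0] ![0,0,1] ![1,0,1] ![1,0,0] (Real.pi / 2) := by
  set s1 : Vv := ![0,0,1]
  set s2 : Vv := ![1,1,0]
  set s3 : Vv := ![0,1,0]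
  set S : Finset Vv := {s1, s2, s3} with hS
  have hA : adjMatrix S = Pmat s1 + Pmat s2 + Pmat s3 := by
    ext u v
    simp only [adjMatrix, Pmat, Matrix.add_apply, hS]
    have h12 : s1 ≠ s2 := by decide
    have h13 : s1 ≠ s3 := by decide
    have h23 : s2 ≠ s3 := by decide
    by_cases e1 : u + v = s1 <;> by_cases e2 : u + v = s2 <;> by_cases e3 : u + v = s3 <;>
      simp_all
  have key : transferMatrix S (Real.pi / 2) = (-Complex.I) • Pmat (s1 + s2 + s3) := by
    unfold transferMatrix
    rw [hA, smul_smul]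
    set c : ℂ := Complex.I * ((Real.pi / 2 : ℝ) : ℂ) with hc
    rw [smul_add, smul_add]
    have comm12 : Commute (c • Pmat s1) (c • Pmat s2) :=
      ((Pmat_commute s1 s2).smul_left c).smul_right c
    have comm13 : Commute (c • Pmat s1) (c • Pmat s3) :=
      ((Pmat_commute s1 s3).smul_left c).smul_right c
    have comm23 : Commute (c • Pmat s2) (c • Pmat s3) :=
      ((Pmat_commute s2 s3).smul_left c).smul_right c
    rw [add_assoc, Matrix.exp_add_of_commute _ _ (comm12.add_right comm13),
      Matrix.exp_add_of_commute _ _ comm23,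
      exp_I_half_pi_smul, exp_I_half_pi_smul, exp_I_half_pi_smul]
    rw [smul_mul_smul_comm, smul_mul_smul_comm, Pmat_mul, Pmat_mul]
    rw [show Complex.I * (Complex.I * Complex.I) = -Complex.I by
      rw [Complex.I_mul_I]; ring, add_assoc]
  unfold hasPEST
  rw [key]
  have habc : Pmat (s1 + s2 + s3) *ᵥ (stdBasis (![0,0,0] : Vv) - stdBasis ![0,0,1])
      = stdBasis (![1,0,1] : Vv) - stdBasis ![1,0,0] := by
    rw [Matrix.mulVec_sub, Pmat_mulVec_stdBasis, Pmat_mulVec_stdBasis]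
    have e1 : s1 + s2 + s3 + ![0,0,0] = (![1,0,1] : Vv) := by decide
    have e2 : s1 + s2 + s3 + ![0,0,1] = (![1,0,0] : Vv) := by decide
    rw [e1, e2]
  rw [Matrix.smul_mulVec, habc]
  rw [dotProduct_smul]
  have hdot : dotProduct (stdBasis (![1,0,1] : Vv) - stdBasis ![1,0,0])
      (stdBasis (![1,0,1] : Vv) - stdBasis ![1,0,0]) = 2 := by
    rw [sub_dotProduct, dotProduct_sub, dotProduct_sub, stdBasis_dot, stdBasis_dot,
      stdBasis_dot, stdBasis_dot]
    have hne : (![1,0,1] : Vv) ≠ ![1,0,0] := by decide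
    rw [if_pos rfl, if_pos rfl, if_neg hne, if_neg (Ne.symm hne)]
    norm_num
  rw [hdot]
  have : (1 / 2 : ℂ) * (-Complex.I • (2 : ℂ)) = -Complex.I := by
    simp [smul_eq_mul]; ring
  rw [this]
  simp [Complex.norm_I]

end
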